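/- Fix μ* > 0 and ε ≥ 0, and let δ_G = f(μ*, ε) with f(μ, ε) = Φ(μ/2 - ε/μ) - e^ε Φ(-μ/2 - ε/μ). Define r(β) = 1 - β + β·δ_G and t(β) = f(μ*, ε + ln β) for β ∈ (0, 1], with t(0) interpreted as the limit 1. Then r(β) ≥ t(β) for all β ∈ [0, 1]. -/

import Mathlib

noncomputable def stdNormalPDF (x : ℝ) : ℝ :=
  (Real.sqrt (2 * Real.pi))⁻¹ * Real.exp (-x ^ 2 / 2)

noncomputable def stdNormalCDF (x : ℝ) : ℝ := ∫ t in Set.Iic x, stdNormalPDF t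

noncomputable def gaussF (μ ε : ℝ) : ℝ :=
  stdNormalCDF (μ / 2 - ε / μ) - Real.exp ε * stdNormalCDF (-μ / 2 - ε / μ)

open Real MeasureTheory Set Filter

lemma pdf_nonneg (x : ℝ) : 0 ≤ stdNormalPDF x := by
  unfold stdNormalPDF; positivity

lemma pdf_cont : Continuous stdNormalPDF := by
  unfold stdNormalPDF; fun_prop

lemma pdf_integrable : Integrable stdNormalPDF := by
  have h : Integrable (fun x : ℝ => Real.exp (-(1/2) * x ^ 2)) := integrable_exp_neg_mul_sq (by norm_num)
  have := h.const_mul (Real.sqrt (2 * Real.pi))⁻¹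
  refine this.congr ?_
  filter_upwards with x
  unfold stdNormalPDF
  ring_nf

lemma pdf_integral : ∫ x, stdNormalPDF x = 1 := by
  have h : ∫ x : ℝ, Real.exp (-(1/2) * x ^ 2) = Real.sqrt (π / (1/2)) := integral_gaussian (1/2)
  have h2 : ∫ x, stdNormalPDF x = (Real.sqrt (2 * π))⁻¹ * ∫ x : ℝ, Real.exp (-(1/2) * x ^ 2) := by
    rw [← integral_const_mul]
    congr 1; ext x; unfold stdNormalPDF; ring_nf
  rw [h2, h]
  rw [show π / (1/2) = 2 * π by ring]
  exact inv_mul_cancel₀ (by positivity)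

lemma cdf_sub (a b : ℝ) : stdNormalCDF b - stdNormalCDF a = ∫ x in a..b, stdNormalPDF x := by
  unfold stdNormalCDF
  exact (intervalIntegral.integral_Iic_sub_Iic (f := stdNormalPDF) (μ := volume) (a := a) (b := b) pdf_integrable.integrableOn pdf_integrable.integrableOn)

lemma cdf_mono : Monotone stdNormalCDF := by
  intro a b hab
  have := cdf_sub a b
  have h2 : 0 ≤ ∫ x in a..b, stdNormalPDF x :=
    intervalIntegral.integral_nonneg hab (fun x _ => pdf_nonneg x)
  linarith

lemma cdf_nonneg (x : ℝ) : 0 ≤ stdNormalCDF x :=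
  setIntegral_nonneg measurableSet_Iic (fun x _ => pdf_nonneg x)

lemma cdf_le_one (x : ℝ) : stdNormalCDF x ≤ 1 := by
  rw [← pdf_integral]
  exact setIntegral_le_integral pdf_integrable (by filter_upwards with x using pdf_nonneg x)

lemma cdf_deriv (x : ℝ) : HasDerivAt stdNormalCDF (stdNormalPDF x) x := by
  have h : ∀ y, stdNormalCDF y = stdNormalCDF 0 + ∫ t in (0:ℝ)..y, stdNormalPDF t := by
    intro y; have := cdf_sub 0 y; linarith
  have hd : HasDerivAt (fun y => stdNormalCDF 0 + ∫ t in (0:ℝ)..y, stdNormalPDF t) (stdNormalPDF x) x := by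
    apply HasDerivAt.const_add
    exact intervalIntegral.integral_hasDerivAt_right pdf_integrable.intervalIntegrable
      pdf_integrable.aestronglyMeasurable.stronglyMeasurableAtFilter (pdf_cont.continuousAt)
  exact hd.congr_of_eventuallyEq (by filter_upwards with y using (h y))

lemma cdf_tendsto_one : Tendsto stdNormalCDF atTop (nhds 1) := by
  rw [← pdf_integral]
  have h := tendsto_setIntegral_of_monotone (f := stdNormalPDF) (μ := volume)
    (s := fun x : ℝ => Iic x) (fun i => measurableSet_Iic) (fun a b hab => Iic_subset_Iic.2 hab)
    (by rw [iUnion_Iic]; exact pdf_integrable.integrableOn)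
  simp [iUnion_Iic] at h
  exact h


section Main

variable (μs ε : ℝ)

noncomputable def Tfun : ℝ → ℝ := fun β =>
  if β ≤ 0 then 1 else
    stdNormalCDF (μs / 2 - (ε + Real.log β) / μs)
      - Real.exp ε * (β * stdNormalCDF (-μs / 2 - (ε + Real.log β) / μs))

lemma pdf_shift (hμ : 0 < μs) {β : ℝ} (hβ : 0 < β) :
    stdNormalPDF (μs / 2 - (ε + Real.log β) / μs)
      = β * (Real.exp ε * stdNormalPDF (-μs / 2 - (ε + Real.log β) / μs)) := by
  unfold stdNormalPDF
  have hμ' : μs ≠ 0 := ne_of_gt hμ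
  rw [show (-(μs / 2 - (ε + Real.log β) / μs) ^ 2 / 2)
      = Real.log β + (ε + -(-μs / 2 - (ε + Real.log β) / μs) ^ 2 / 2) from by
    field_simp; ring]
  rw [Real.exp_add, Real.exp_add, Real.exp_log hβ]
  ring

lemma T_hasDeriv (hμ : 0 < μs) {β : ℝ} (hβ : 0 < β) :
    HasDerivAt (Tfun μs ε)
      (-(Real.exp ε * stdNormalCDF (-μs / 2 - (ε + Real.log β) / μs))) β := by
  have hμ' : μs ≠ 0 := ne_of_gt hμ
  have hβ' : β ≠ 0 := ne_of_gt hβ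
  -- derivative of inner function
  have hinner1 : HasDerivAt (fun x : ℝ => μs / 2 - (ε + Real.log x) / μs)
      (-(β⁻¹ / μs)) β := by
    have := ((Real.hasDerivAt_log hβ').const_add ε).div_const μs
    simpa using (this.const_sub (μs / 2))
  have hinner2 : HasDerivAt (fun x : ℝ => -μs / 2 - (ε + Real.log x) / μs)
      (-(β⁻¹ / μs)) β := by
    have := ((Real.hasDerivAt_log hβ').const_add ε).div_const μs
    simpa using (this.const_sub (-μs / 2))
  have h1 : HasDerivAt (fun x : ℝ => stdNormalCDF (μs / 2 - (ε + Real.log x) / μs))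
      (stdNormalPDF (μs / 2 - (ε + Real.log β) / μs) * (-(β⁻¹ / μs))) β :=
    (cdf_deriv _).comp β hinner1
  have h2 : HasDerivAt (fun x : ℝ => stdNormalCDF (-μs / 2 - (ε + Real.log x) / μs))
      (stdNormalPDF (-μs / 2 - (ε + Real.log β) / μs) * (-(β⁻¹ / μs))) β :=
    (cdf_deriv _).comp β hinner2
  have h3 : HasDerivAt (fun x : ℝ => x * stdNormalCDF (-μs / 2 - (ε + Real.log x) / μs))
      (stdNormalCDF (-μs / 2 - (ε + Real.log β) / μs)
        + β * (stdNormalPDF (-μs / 2 - (ε + Real.log β) / μs) * (-(β⁻¹ / μs)))) β := by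
    simpa using (hasDerivAt_id' β).fun_mul h2
  have h4 : HasDerivAt (fun x : ℝ =>
      stdNormalCDF (μs / 2 - (ε + Real.log x) / μs)
        - Real.exp ε * (x * stdNormalCDF (-μs / 2 - (ε + Real.log x) / μs)))
      (stdNormalPDF (μs / 2 - (ε + Real.log β) / μs) * (-(β⁻¹ / μs))
        - Real.exp ε * (stdNormalCDF (-μs / 2 - (ε + Real.log β) / μs)
          + β * (stdNormalPDF (-μs / 2 - (ε + Real.log β) / μs) * (-(β⁻¹ / μs))))) β :=
    h1.sub (h3.const_mul (Real.exp ε))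
  have heq : Tfun μs ε =ᶠ[nhds β] (fun x : ℝ =>
      stdNormalCDF (μs / 2 - (ε + Real.log x) / μs)
        - Real.exp ε * (x * stdNormalCDF (-μs / 2 - (ε + Real.log x) / μs))) := by
    filter_upwards [eventually_gt_nhds hβ] with x hx
    simp [Tfun, not_le.2 hx]
  have hval : stdNormalPDF (μs / 2 - (ε + Real.log β) / μs) * (-(β⁻¹ / μs))
        - Real.exp ε * (stdNormalCDF (-μs / 2 - (ε + Real.log β) / μs)
          + β * (stdNormalPDF (-μs / 2 - (ε + Real.log β) / μs) * (-(β⁻¹ / μs))))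
      = -(Real.exp ε * stdNormalCDF (-μs / 2 - (ε + Real.log β) / μs)) := by
    rw [pdf_shift μs ε hμ hβ]
    field_simp
    ring
  rw [← hval]
  exact h4.congr_of_eventuallyEq heq

lemma T_tendsto (hμ : 0 < μs) :
    Filter.Tendsto (Tfun μs ε) (nhdsWithin 0 (Ioi 0)) (nhds 1) := by
  have hμ' : μs ≠ 0 := ne_of_gt hμ
  have hlog : Tendsto Real.log (nhdsWithin 0 (Ioi (0:ℝ))) atBot :=
    Real.tendsto_log_nhdsGT_zero
  have h1 : Tendsto (fun β : ℝ => μs / 2 - (ε + Real.log β) / μs)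
      (nhdsWithin 0 (Ioi (0:ℝ))) atTop := by
    have h := tendsto_atBot_add_const_left (nhdsWithin 0 (Ioi (0:ℝ))) ε hlog
    have h2 : Tendsto (fun β : ℝ => (ε + Real.log β) / μs) (nhdsWithin 0 (Ioi (0:ℝ))) atBot := by
      simpa [div_eq_mul_inv] using h.atBot_mul_const (inv_pos.2 hμ)
    have h3 : Tendsto (fun β : ℝ => -((ε + Real.log β) / μs)) (nhdsWithin 0 (Ioi (0:ℝ))) atTop :=
      (Filter.tendsto_neg_atTop_iff (f := fun β : ℝ => (ε + Real.log β) / μs)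
        (l := nhdsWithin 0 (Ioi (0:ℝ)))).2 h2
    simpa [sub_eq_add_neg] using (tendsto_atTop_add_const_left (nhdsWithin 0 (Ioi (0:ℝ))) (μs / 2) h3)
  have hA : Tendsto (fun β : ℝ => stdNormalCDF (μs / 2 - (ε + Real.log β) / μs))
      (nhdsWithin 0 (Ioi (0:ℝ))) (nhds 1) := cdf_tendsto_one.comp h1
  have hB : Tendsto (fun β : ℝ => β * stdNormalCDF (-μs / 2 - (ε + Real.log β) / μs))
      (nhdsWithin 0 (Ioi (0:ℝ))) (nhds 0) := by
    apply squeeze_zero' (g := fun β : ℝ => β)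
    · filter_upwards [self_mem_nhdsWithin] with x hx
      exact mul_nonneg (le_of_lt hx) (cdf_nonneg _)
    · filter_upwards [self_mem_nhdsWithin] with x hx
      calc x * stdNormalCDF (-μs / 2 - (ε + Real.log x) / μs) ≤ x * 1 :=
            mul_le_mul_of_nonneg_left (cdf_le_one _) (le_of_lt hx)
        _ = x := mul_one x
    · exact tendsto_nhdsWithin_of_tendsto_nhds tendsto_id
  have : Tendsto (fun β : ℝ =>
      stdNormalCDF (μs / 2 - (ε + Real.log β) / μs)
        - Real.exp ε * (β * stdNormalCDF (-μs / 2 - (ε + Real.log β) / μs)))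
      (nhdsWithin 0 (Ioi (0:ℝ))) (nhds 1) := by
    have := hA.sub ((hB.const_mul (Real.exp ε)))
    simpa using this
  apply this.congr'
  filter_upwards [self_mem_nhdsWithin] with x hx
  simp [Tfun, not_le.2 (mem_Ioi.1 hx)]

lemma T_convex (hμ : 0 < μs) : ConvexOn ℝ (Icc 0 1) (Tfun μs ε) := by
  have hcont : ContinuousOn (Tfun μs ε) (Icc 0 1) := by
    intro x hx
    rcases eq_or_lt_of_le hx.1 with h0 | h0
    · subst h0
      apply ContinuousWithinAt.mono _ (Icc_subset_Ici_self : Icc (0:ℝ) 1 ⊆ Ici 0)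
      rw [← continuousWithinAt_Ioi_iff_Ici]
      unfold ContinuousWithinAt
      have hT0 : Tfun μs ε 0 = 1 := by simp [Tfun]
      rw [hT0]
      exact T_tendsto μs ε hμ
    · exact ((T_hasDeriv μs ε hμ h0).differentiableAt.continuousAt).continuousWithinAt
  apply MonotoneOn.convexOn_of_deriv (convex_Icc 0 1) hcont
  · rw [interior_Icc]
    intro x hx
    exact (T_hasDeriv μs ε hμ hx.1).differentiableAt.differentiableWithinAt
  · rw [interior_Icc]
    intro x hx y hy hxy
    rw [(T_hasDeriv μs ε hμ hx.1).deriv, (T_hasDeriv μs ε hμ hy.1).deriv]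
    have hb : -μs / 2 - (ε + Real.log y) / μs ≤ -μs / 2 - (ε + Real.log x) / μs := by
      have := Real.log_le_log hx.1 hxy
      have h2 : (ε + Real.log x) / μs ≤ (ε + Real.log y) / μs := by
        gcongr
      linarith
    have := cdf_mono hb
    have he : (0:ℝ) ≤ Real.exp ε := (Real.exp_pos ε).le
    nlinarith [mul_le_mul_of_nonneg_left this he]

end Main

theorem gaussF_le_affine (μs ε : ℝ) (hμ : 0 < μs) (hε : 0 ≤ ε) :
    ∀ β ∈ Set.Icc (0 : ℝ) 1,
      (if β = 0 then 1 else gaussF μs (ε + Real.log β))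
        ≤ 1 - β + β * gaussF μs ε := by
  intro β hβ
  by_cases hβ0 : β = 0
  · simp [hβ0]
  · have hpos : 0 < β := lt_of_le_of_ne hβ.1 (Ne.symm hβ0)
    rw [if_neg hβ0]
    have hconv := T_convex μs ε hμ
    have hc := hconv.2 (left_mem_Icc.2 zero_le_one) (right_mem_Icc.2 zero_le_one)
      (by linarith [hβ.2] : (0:ℝ) ≤ 1 - β) hβ.1 (by ring)
    have harg : (1 - β) • (0:ℝ) + β • (1:ℝ) = β := by simp
    rw [harg] at hc
    have hT0 : Tfun μs ε 0 = 1 := by simp [Tfun]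
    have hT1 : Tfun μs ε 1 = gaussF μs ε := by
      simp [Tfun, Real.log_one, gaussF]
    have hTβ : Tfun μs ε β = gaussF μs (ε + Real.log β) := by
      simp only [Tfun, not_le.2 hpos, if_false, gaussF, Real.exp_add, Real.exp_log hpos]
      ring
    rw [hT0, hT1, hTβ] at hc
    simpa [smul_eq_mul] using hc
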